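/- Let κ ∈ (0,1) and g = −3/2 + κ. Let u_I < u₁, let r : (u_I, u₁] → (0,∞) be continuously differentiable with r'(u) < 0 for all u and r(u) → ∞ as u → u_I⁺, and let ψ : (u_I, u₁] → ℝ be continuously differentiable with r(u)ψ(u)² → 0 as u → u_I⁺. Define the twisted derivative ∇̃ψ = ψ' − g(r'/r)ψ, and suppose the integrals ∫_{u_I}^{u₁} (−r')ψ² du and ∫_{u_I}^{u₁} (r²/(−r'))(∇̃ψ)² du are finite. Then the Hardy inequality ∫_{u_I}^{u₁} (−r'(u))ψ(u)² du ≤ r(u₁)ψ(u₁)²/(1−κ) + (1−κ)^{−2} ∫_{u_I}^{u₁} (r(u)²/(−r'(u)))(∇̃ψ(u))² du holds. -/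

import Mathlib

open MeasureTheory Set Filter intervalIntegral

/-- Hardy inequality along an ingoing null ray reaching infinity: with
`g = −3/2 + κ` and twisted derivative `∇̃ψ = ψ' − g(r'/r)ψ`,
`∫ (−r')ψ² ≤ r(u₁)ψ(u₁)²/(1−κ) + (1−κ)⁻² ∫ (r²/(−r'))(∇̃ψ)²`. -/
theorem stmt_10 (κ g : ℝ) (hκ : κ ∈ Set.Ioo (0 : ℝ) 1) (hg : g = -3 / 2 + κ)
    (uI u₁ : ℝ) (huI : uI < u₁)
    (r ψ r' ψ' : ℝ → ℝ)
    (hr : ∀ u ∈ Set.Ioc uI u₁, HasDerivWithinAt r (r' u) (Set.Ioc uI u₁) u)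
    (hr'c : ContinuousOn r' (Set.Ioc uI u₁))
    (hrpos : ∀ u ∈ Set.Ioc uI u₁, 0 < r u)
    (hr'neg : ∀ u ∈ Set.Ioc uI u₁, r' u < 0)
    (hrtop : Filter.Tendsto r (nhdsWithin uI (Set.Ioi uI)) Filter.atTop)
    (hψ : ∀ u ∈ Set.Ioc uI u₁, HasDerivWithinAt ψ (ψ' u) (Set.Ioc uI u₁) u)
    (hψ'c : ContinuousOn ψ' (Set.Ioc uI u₁))
    (hlim : Filter.Tendsto (fun u => r u * (ψ u) ^ 2) (nhdsWithin uI (Set.Ioi uI))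
      (nhds 0))
    (hint1 : MeasureTheory.IntegrableOn (fun u => (-(r' u)) * (ψ u) ^ 2)
      (Set.Ioc uI u₁))
    (hint2 : MeasureTheory.IntegrableOn
      (fun u => (r u) ^ 2 / (-(r' u)) * (ψ' u - g * (r' u / r u) * ψ u) ^ 2)
      (Set.Ioc uI u₁)) :
    ∫ u in Set.Ioc uI u₁, (-(r' u)) * (ψ u) ^ 2
      ≤ r u₁ * (ψ u₁) ^ 2 / (1 - κ)
        + (1 / (1 - κ) ^ 2)
            * ∫ u in Set.Ioc uI u₁,
                (r u) ^ 2 / (-(r' u)) * (ψ' u - g * (r' u / r u) * ψ u) ^ 2 := by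
  obtain ⟨hκ0, hκ1⟩ := hκ
  have hc : (0:ℝ) < 1 - κ := by linarith
  -- basic continuity
  have hrc : ContinuousOn r (Set.Ioc uI u₁) := fun u hu => (hr u hu).continuousWithinAt
  have hψc : ContinuousOn ψ (Set.Ioc uI u₁) := fun u hu => (hψ u hu).continuousWithinAt
  -- the inner derivative
  have hGc : ContinuousOn
      (fun u => (r u) ^ 2 / (-(r' u)) * (ψ' u - g * (r' u / r u) * ψ u) ^ 2)
      (Set.Ioc uI u₁) := by
    apply ContinuousOn.mul
    · exact ((hrc.pow 2).div hr'c.neg (fun u hu => by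
        have := hr'neg u hu; intro h; rw [neg_eq_zero] at h; linarith))
    · exact ((hψ'c.sub (((continuousOn_const.mul
        (hr'c.div hrc (fun u hu => (hrpos u hu).ne'))).mul hψc))).pow 2)
  have hDc : ContinuousOn (fun u => r' u * ψ u ^ 2 + 2 * r u * ψ u * ψ' u)
      (Set.Ioc uI u₁) := by
    exact (hr'c.mul (hψc.pow 2)).add
      (((continuousOn_const.mul hrc).mul hψc).mul hψ'c)
  have hHc : ContinuousOn (fun u => (-(r' u)) * (ψ u) ^ 2) (Set.Ioc uI u₁) :=
    hr'c.neg.mul (hψc.pow 2)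
  -- pointwise inequality
  have hpt : ∀ u ∈ Set.Ioc uI u₁,
      (1 - κ) * ((-(r' u)) * (ψ u) ^ 2)
        ≤ (r' u * ψ u ^ 2 + 2 * r u * ψ u * ψ' u)
          + (1 / (1 - κ)) * ((r u) ^ 2 / (-(r' u)) * (ψ' u - g * (r' u / r u) * ψ u) ^ 2) := by
    intro u hu
    have hA : 0 < -(r' u) := by linarith [hr'neg u hu]
    have hR : 0 < r u := hrpos u hu
    have hid : (r' u * ψ u ^ 2 + 2 * r u * ψ u * ψ' u)
          + (1 / (1 - κ)) * ((r u) ^ 2 / (-(r' u)) * (ψ' u - g * (r' u / r u) * ψ u) ^ 2)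
          - (1 - κ) * ((-(r' u)) * (ψ u) ^ 2)
        = ((1 - κ) * (-(r' u)) * ψ u
            + r u * (ψ' u - g * (r' u / r u) * ψ u)) ^ 2 / ((1 - κ) * (-(r' u))) := by
      have h1 : r' u ≠ 0 := ne_of_lt (hr'neg u hu)
      have h2 : r u ≠ 0 := hR.ne'
      have h3 : (1:ℝ) - κ ≠ 0 := hc.ne'
      subst hg
      field_simp
      ring
    nlinarith [div_nonneg (sq_nonneg ((1 - κ) * (-(r' u)) * ψ u
      + r u * (ψ' u - g * (r' u / r u) * ψ u))) (le_of_lt (mul_pos hc hA)), hid]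
  -- main inequality for a ∈ Ioo uI u₁
  have main : ∀ a ∈ Set.Ioo uI u₁,
      (1 - κ) * (∫ u in Set.Ioc a u₁, (-(r' u)) * (ψ u) ^ 2)
        ≤ (r u₁ * ψ u₁ ^ 2 - r a * ψ a ^ 2)
          + (1 / (1 - κ)) * ∫ u in Set.Ioc a u₁,
              (r u) ^ 2 / (-(r' u)) * (ψ' u - g * (r' u / r u) * ψ u) ^ 2 := by
    intro a ha
    have hsub : Set.Icc a u₁ ⊆ Set.Ioc uI u₁ := fun x hx => ⟨lt_of_lt_of_le ha.1 hx.1, hx.2⟩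
    have hsub' : Set.Ioc a u₁ ⊆ Set.Icc a u₁ := Set.Ioc_subset_Icc_self
    have hab : a ≤ u₁ := ha.2.le
    -- FTC
    have hftc : ∫ u in a..u₁, (r' u * ψ u ^ 2 + 2 * r u * ψ u * ψ' u)
        = r u₁ * ψ u₁ ^ 2 - r a * ψ a ^ 2 := by
      apply intervalIntegral.integral_eq_sub_of_hasDeriv_right_of_le hab
      · exact (hrc.mul (hψc.pow 2)).mono hsub
      · intro x hx
        have hx' : Set.Ioc uI u₁ ∈ nhds x := Ioc_mem_nhds (ha.1.trans hx.1) hx.2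
        have hxm : x ∈ Set.Ioc uI u₁ := ⟨ha.1.trans hx.1, hx.2.le⟩
        have h1 := (hr x hxm).hasDerivAt hx'
        have h2 := (hψ x hxm).hasDerivAt hx'
        have := h1.mul (h2.pow 2)
        have h3 : r' x * ψ x ^ 2 + 2 * r x * ψ x * ψ' x
            = r' x * ψ x ^ 2 + r x * (2 * ψ x ^ 1 * ψ' x) := by ring
        rw [h3]
        exact this.hasDerivWithinAt
      · rw [intervalIntegrable_iff_integrableOn_Icc_of_le hab]
        exact (hDc.mono hsub).integrableOn_compact isCompact_Icc
    have hintD : IntegrableOn (fun u => r' u * ψ u ^ 2 + 2 * r u * ψ u * ψ' u)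
        (Set.Ioc a u₁) :=
      ((hDc.mono hsub).integrableOn_compact isCompact_Icc).mono_set hsub'
    have hintG : IntegrableOn
        (fun u => (r u) ^ 2 / (-(r' u)) * (ψ' u - g * (r' u / r u) * ψ u) ^ 2)
        (Set.Ioc a u₁) :=
      ((hGc.mono hsub).integrableOn_compact isCompact_Icc).mono_set hsub'
    have hintH : IntegrableOn (fun u => (-(r' u)) * (ψ u) ^ 2) (Set.Ioc a u₁) :=
      ((hHc.mono hsub).integrableOn_compact isCompact_Icc).mono_set hsub'
    have hIoc : Set.Ioc a u₁ ⊆ Set.Ioc uI u₁ := fun x hx => hsub (hsub' hx)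
    have hmono : ∫ u in Set.Ioc a u₁, (1 - κ) * ((-(r' u)) * (ψ u) ^ 2)
        ≤ ∫ u in Set.Ioc a u₁, ((r' u * ψ u ^ 2 + 2 * r u * ψ u * ψ' u)
          + (1 / (1 - κ)) * ((r u) ^ 2 / (-(r' u)) * (ψ' u - g * (r' u / r u) * ψ u) ^ 2)) := by
      apply setIntegral_mono_on (hintH.const_mul _)
        (hintD.add (hintG.const_mul _)) measurableSet_Ioc
      intro x hx
      exact hpt x (hIoc hx)
    rw [MeasureTheory.integral_const_mul] at hmono
    rw [MeasureTheory.integral_add hintD (hintG.const_mul _),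
      MeasureTheory.integral_const_mul] at hmono
    rw [intervalIntegral.integral_of_le hab] at hftc
    rw [hftc] at hmono
    exact hmono
  -- the approximating sequence
  set a : ℕ → ℝ := fun n => uI + (u₁ - uI) / (n + 2) with ha
  have hd : ∀ n : ℕ, (0:ℝ) < (n:ℝ) + 2 := fun n => by positivity
  have hmem : ∀ n, a n ∈ Set.Ioo uI u₁ := by
    intro n
    constructor
    · simp only [ha, lt_add_iff_pos_right]
      exact div_pos (by linarith) (hd n)
    · have : (u₁ - uI) / ((n:ℝ) + 2) < u₁ - uI :=
        div_lt_self (by linarith) (by linarith [hd n])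
      simp only [ha]; linarith
  have hanti : ∀ m n : ℕ, m ≤ n → a n ≤ a m := by
    intro m n hmn
    have : (u₁ - uI) / ((n:ℝ) + 2) ≤ (u₁ - uI) / ((m:ℝ) + 2) := by
      have hmn' : (m:ℝ) ≤ (n:ℝ) := Nat.cast_le.mpr hmn
      gcongr
      all_goals linarith [hd m]
    simp only [ha]; linarith
  have hsmono : Monotone (fun n => Set.Ioc (a n) u₁) := by
    intro m n hmn
    exact Set.Ioc_subset_Ioc_left (hanti m n hmn)
  have hunion : (⋃ n, Set.Ioc (a n) u₁) = Set.Ioc uI u₁ := by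
    apply Set.Subset.antisymm
    · exact Set.iUnion_subset fun n => Set.Ioc_subset_Ioc_left (hmem n).1.le
    · intro x hx
      have hxI : 0 < x - uI := by linarith [hx.1]
      obtain ⟨n, hn⟩ := exists_nat_gt ((u₁ - uI) / (x - uI))
      refine Set.mem_iUnion.mpr ⟨n, ?_, hx.2⟩
      have h1 : u₁ - uI < ((n:ℝ)) * (x - uI) := (div_lt_iff₀ hxI).mp hn
      have h2 : (u₁ - uI) / ((n:ℝ) + 2) < x - uI := by
        rw [div_lt_iff₀ (hd n)]
        nlinarith [hxI]
      simp only [ha]; linarith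
  -- tendsto of the sequence
  have hta : Filter.Tendsto a Filter.atTop (nhdsWithin uI (Set.Ioi uI)) := by
    apply tendsto_nhdsWithin_of_tendsto_nhds_of_eventually_within
    · have h0 : Filter.Tendsto (fun n : ℕ => (u₁ - uI) / ((n:ℝ) + 2)) Filter.atTop (nhds 0) := by
        apply Filter.Tendsto.div_atTop (tendsto_const_nhds)
        exact Filter.tendsto_atTop_add_const_right _ 2 tendsto_natCast_atTop_atTop
      have := h0.const_add uI
      simpa using this
    · exact Filter.Eventually.of_forall fun n => (hmem n).1
  have hFlim : Filter.Tendsto (fun n => r (a n) * ψ (a n) ^ 2) Filter.atTop (nhds 0) :=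
    hlim.comp hta
  -- limits of the integrals
  have hIH : Filter.Tendsto (fun n => ∫ u in Set.Ioc (a n) u₁, (-(r' u)) * (ψ u) ^ 2)
      Filter.atTop (nhds (∫ u in Set.Ioc uI u₁, (-(r' u)) * (ψ u) ^ 2)) := by
    have := MeasureTheory.tendsto_setIntegral_of_monotone
      (fun n => measurableSet_Ioc) hsmono (by rw [hunion]; exact hint1)
    rwa [hunion] at this
  have hIG : Filter.Tendsto (fun n => ∫ u in Set.Ioc (a n) u₁,
        (r u) ^ 2 / (-(r' u)) * (ψ' u - g * (r' u / r u) * ψ u) ^ 2)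
      Filter.atTop (nhds (∫ u in Set.Ioc uI u₁,
        (r u) ^ 2 / (-(r' u)) * (ψ' u - g * (r' u / r u) * ψ u) ^ 2)) := by
    have := MeasureTheory.tendsto_setIntegral_of_monotone
      (fun n => measurableSet_Ioc) hsmono (by rw [hunion]; exact hint2)
    rwa [hunion] at this
  -- pass to the limit
  have hkey : (1 - κ) * (∫ u in Set.Ioc uI u₁, (-(r' u)) * (ψ u) ^ 2)
      ≤ r u₁ * ψ u₁ ^ 2 + (1 / (1 - κ)) * ∫ u in Set.Ioc uI u₁,
          (r u) ^ 2 / (-(r' u)) * (ψ' u - g * (r' u / r u) * ψ u) ^ 2 := by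
    have hL := hIH.const_mul (1 - κ)
    have hR := ((tendsto_const_nhds (x := r u₁ * ψ u₁ ^ 2)).sub hFlim).add
      (hIG.const_mul (1 / (1 - κ)))
    rw [sub_zero] at hR
    exact le_of_tendsto_of_tendsto' hL hR fun n => main (a n) (hmem n)
  -- final algebra
  set IH := ∫ u in Set.Ioc uI u₁, (-(r' u)) * (ψ u) ^ 2 with hIHdef
  set IG := ∫ u in Set.Ioc uI u₁,
      (r u) ^ 2 / (-(r' u)) * (ψ' u - g * (r' u / r u) * ψ u) ^ 2 with hIGdef
  have heq : r u₁ * ψ u₁ ^ 2 / (1 - κ) + (1 / (1 - κ) ^ 2) * IG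
      = (r u₁ * ψ u₁ ^ 2 + (1 / (1 - κ)) * IG) / (1 - κ) := by
    field_simp
  rw [heq, le_div_iff₀ hc]
  nlinarith [hkey]
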